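/- Every fractal necklace F in ℝ^d is locally path-connected: for each z ∈ F and each m ≥ 1, the union of all m-level copies of F containing z is a path-connected neighborhood of z in F, and these form a neighborhood basis at z. -/

import Mathlib

open Set Topology Metric Bornology

noncomputable section

/-- Euclidean space `ℝ^d`. -/
abbrev Euc (d : ℕ) := EuclideanSpace ℝ (Fin d)

/-- A fractal necklace in `ℝ^d`: the attractor `F` of a necklace IFS `f_1, …, f_n`
(`n ≥ 3`) of contractive homeomorphisms of `ℝ^d`, where cyclically adjacent 1-level
copies meet in a single point (a main node `z k`) and non-adjacent copies are disjoint. -/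
structure Necklace (d : ℕ) where
  n : ℕ
  hn : 3 ≤ n
  f : Fin n → (Euc d ≃ₜ Euc d)
  contr : ∀ k, ∃ c : NNReal, c < 1 ∧ LipschitzWith c (f k)
  F : Set (Euc d)
  Fne : F.Nonempty
  Fcpt : IsCompact F
  Fattr : F = ⋃ k, (f k) '' F
  z : Fin n → Euc d
  hz : ∀ k : Fin n, (f k) '' F ∩ (f (k + ⟨1, by omega⟩)) '' F = {z k}
  hdisj : ∀ m k : Fin n, m ≠ k → m ≠ k + ⟨1, by omega⟩ → k ≠ m + ⟨1, by omega⟩ →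
    (f m) '' F ∩ (f k) '' F = ∅

namespace Necklace

variable {d : ℕ}

/-- The digit `1` of `Fin n`. -/
def one (N : Necklace d) : Fin N.n := ⟨1, by have := N.hn; omega⟩

/-- The homeomorphism `f_σ = f_{i₁} ∘ ⋯ ∘ f_{i_m}` associated to a word `σ = i₁⋯i_m`. -/
def word (N : Necklace d) : List (Fin N.n) → (Euc d ≃ₜ Euc d)
  | [] => Homeomorph.refl _
  | i :: s => (N.word s).trans (N.f i)

/-- The copy `F_σ = f_σ(F)` of the necklace. -/
def copy (N : Necklace d) (σ : List (Fin N.n)) : Set (Euc d) := N.word σ '' N.F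

/-- `c_m(x)`: the number of words `σ` of length `m` with `x ∈ F_σ`. -/
def cnt (N : Necklace d) (m : ℕ) (x : Euc d) : ℕ :=
  Set.ncard {σ : List (Fin N.n) | σ.length = m ∧ x ∈ N.copy σ}

/-- The boundary `∂_F F_k = {z_{k-1}, z_k}` of the 1-level copy `F_k` in `F`. -/
def bdry (N : Necklace d) (k : Fin N.n) : Set (Euc d) := {N.z (k - N.one), N.z k}

/-- A necklace is stable if for each `k` at least two second-level copies `F_{kj}`
meet `∂_F F_k`. -/
def Stable (N : Necklace d) : Prop :=
  ∀ k : Fin N.n,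
    2 ≤ Set.ncard {A : Set (Euc d) |
      (∃ j : Fin N.n, A = N.f k '' (N.f j '' N.F)) ∧ (A ∩ N.bdry k).Nonempty}

/-- A necklace is good if `∂_F F_k` is not contained in any second-level copy `F_{kj}`. -/
def Good (N : Necklace d) : Prop :=
  ∀ k j : Fin N.n, ¬ (N.bdry k ⊆ N.f k '' (N.f j '' N.F))

/-- A necklace is of bounded ramification if `{c_m(z_k)}_m` is bounded for each `k`. -/
def BoundedRamification (N : Necklace d) : Prop :=
  ∀ k : Fin N.n, ∃ C : ℕ, ∀ m : ℕ, N.cnt m (N.z k) ≤ C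

/-- `M_F`: the set of points that are main nodes of some copy of `F`. -/
def MF (N : Necklace d) : Set (Euc d) :=
  {x | ∃ (σ : List (Fin N.n)) (k : Fin N.n), x = N.word σ (N.z k)}

/-- A necklace has no cut points if `F \ {x}` is connected for every `x ∈ F`. -/
def NoCutPoints (N : Necklace d) : Prop :=
  ∀ x ∈ N.F, IsConnected (N.F \ {x})

/-- Property I: each 1-level copy `F_k` has an arc from `z_{k-1}` to `z_k` passing
through at least two main nodes of `F_k`. -/
def PropertyI (N : Necklace d) : Prop :=
  ∀ k : Fin N.n, ∃ γ : Path (N.z (k - N.one)) (N.z k),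
    Function.Injective γ ∧ (∀ t, γ t ∈ N.f k '' N.F) ∧
    ∃ p q : Euc d, p ≠ q ∧ (∃ j, p = N.f k (N.z j)) ∧ (∃ j, q = N.f k (N.z j)) ∧
      p ∈ Set.range γ ∧ q ∈ Set.range γ

/-- A necklace is self-similar if the maps of its NIFS are (contractive) similitudes. -/
def SelfSimilar (N : Necklace d) : Prop :=
  ∀ k : Fin N.n, ∃ c : ℝ, 0 < c ∧ c < 1 ∧ ∀ x y, dist (N.f k x) (N.f k y) = c * dist x y

/-- The open set condition for the NIFS of a necklace. -/
def OSC (N : Necklace d) : Prop :=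
  ∃ V : Set (Euc d), V.Nonempty ∧ IsOpen V ∧ IsBounded V ∧
    (∀ k, N.f k '' V ⊆ V) ∧ ∀ j k : Fin N.n, j ≠ k → N.f j '' V ∩ N.f k '' V = ∅

end Necklace

/-- The union of all `m`-level copies of `F` containing the point `x`. -/
def Necklace.copiesNbhd {d : ℕ} (N : Necklace d) (x : Euc d) (m : ℕ) : Set (Euc d) :=
  ⋃ σ ∈ {σ : List (Fin N.n) | σ.length = m ∧ x ∈ N.copy σ}, N.copy σ

/-! ### Auxiliary machinery: chains of sets and concatenated paths -/

namespace NecklaceAux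

open unitInterval

/-- A segment path in a real normed vector space. -/
noncomputable def seg {E : Type*} [NormedAddCommGroup E] [NormedSpace ℝ E] (a b : E) :
    Path a b where
  toFun t := a + (t : ℝ) • (b - a)
  continuous_toFun := by fun_prop
  source' := by simp
  target' := by simp

lemma seg_dist {E : Type*} [NormedAddCommGroup E] [NormedSpace ℝ E] (a b : E) (t : unitInterval) :
    dist (seg a b t) a ≤ dist a b := by
  have : seg a b t - a = (t : ℝ) • (b - a) := by simp [seg]
  rw [dist_eq_norm, this, norm_smul, dist_eq_norm, ← norm_neg (a - b)]
  simp only [neg_sub]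
  refine mul_le_of_le_one_left (norm_nonneg _) ?_
  rw [Real.norm_eq_abs, abs_of_nonneg t.2.1]
  exact t.2.2

variable {X : Type*}

/-- Data of a chain of sets from `T` inside `C` linking `a` to `b`. -/
inductive CData (T : Set (Set X)) (C : Set X) : X → X → Type _
  | single (a b : X) (D : Set X) (hT : D ∈ T) (hs : D ⊆ C) (ha : a ∈ D) (hb : b ∈ D) :
      CData T C a b
  | cons (a b c : X) (D : Set X) (hT : D ∈ T) (hs : D ⊆ C) (ha : a ∈ D) (hb : b ∈ D)
      (rest : CData T C b c) : CData T C a c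

variable [TopologicalSpace X] {T : Set (Set X)} {C : Set X} {a b : X}

/-- Concatenate paths along a chain. -/
noncomputable def CData.path (g : ∀ (D : Set X) (p q : X), D ∈ T → p ∈ D → q ∈ D → Path p q) :
    ∀ {a b : X}, CData T C a b → Path a b
  | _, _, single a b D hT _ ha hb => g D a b hT ha hb
  | _, _, cons a b c D hT _ ha hb rest => (g D a b hT ha hb).trans (rest.path g)

lemma CData.path_prop (c : CData T C a b)
    (g : ∀ (D : Set X) (p q : X), D ∈ T → p ∈ D → q ∈ D → Path p q) (Q : X → Prop)
    (hg : ∀ (D : Set X) (p q : X) (hT : D ∈ T), D ⊆ C → ∀ (hp : p ∈ D) (hq : q ∈ D) (t : unitInterval),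
      Q (g D p q hT hp hq t)) : ∀ t, Q (c.path g t) := by
  induction c with
  | single a b D hT hs ha hb => exact fun t => hg D a b hT hs ha hb t
  | cons a b c D hT hs ha hb rest ih =>
    intro t
    rw [CData.path, Path.trans_apply]
    split_ifs
    · exact hg D a b hT hs ha hb _
    · exact ih _

lemma CData.path_close {X : Type*} [PseudoMetricSpace X] {T : Set (Set X)} {C : Set X} {a b : X}
    (c : CData T C a b)
    (g₁ g₂ : ∀ (D : Set X) (p q : X), D ∈ T → p ∈ D → q ∈ D → Path p q) (δ : ℝ)
    (h : ∀ (D : Set X) (p q : X) (hT : D ∈ T) (hp : p ∈ D) (hq : q ∈ D) (t : unitInterval),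
      dist (g₁ D p q hT hp hq t) (g₂ D p q hT hp hq t) ≤ δ) :
    ∀ t, dist (c.path g₁ t) (c.path g₂ t) ≤ δ := by
  induction c with
  | single a b D hT hs ha hb => exact fun t => h D a b hT ha hb t
  | cons a b c D hT hs ha hb rest ih =>
    intro t
    rw [CData.path, CData.path, Path.trans_apply, Path.trans_apply]
    split_ifs
    · exact h D a b hT ha hb _
    · exact ih _

/-- Map a chain forward by a function. -/
def CData.map {Y : Type*} {T' : Set (Set Y)} (f : X → Y)
    (hT' : ∀ D ∈ T, f '' D ∈ T') :
    ∀ {a b : X}, CData T C a b → CData T' (f '' C) (f a) (f b)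
  | _, _, single a b D hT hs ha hb =>
      single (f a) (f b) (f '' D) (hT' D hT) (image_mono (f := f) hs)
        (mem_image_of_mem f ha) (mem_image_of_mem f hb)
  | _, _, cons a b c D hT hs ha hb rest =>
      cons (f a) (f b) (f c) (f '' D) (hT' D hT) (image_mono (f := f) hs)
        (mem_image_of_mem f ha) (mem_image_of_mem f hb) (rest.map f hT')

end NecklaceAux

/-! ### Basic properties of necklaces -/

namespace Necklace

open NecklaceAux Filter

variable {d : ℕ} (N : Necklace d)

lemma image_F_subset (k : Fin N.n) : N.f k '' N.F ⊆ N.F := by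
  conv_rhs => rw [N.Fattr]
  exact subset_iUnion (fun k => N.f k '' N.F) k

lemma word_cons (i : Fin N.n) (σ : List (Fin N.n)) :
    ⇑(N.word (i :: σ)) = N.f i ∘ N.word σ := rfl

lemma copy_nil : N.copy [] = N.F := by simp [copy, word]

lemma copy_cons (i : Fin N.n) (σ : List (Fin N.n)) :
    N.copy (i :: σ) = N.f i '' N.copy σ := by
  rw [copy, copy, word_cons, image_comp]

lemma copy_subset (σ : List (Fin N.n)) : N.copy σ ⊆ N.F := by
  induction σ with
  | nil => rw [copy_nil]
  | cons i σ ih =>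
    rw [copy_cons]
    exact (image_mono ih).trans (N.image_F_subset i)

lemma word_append (σ τ : List (Fin N.n)) :
    ⇑(N.word (σ ++ τ)) = ⇑(N.word σ) ∘ ⇑(N.word τ) := by
  induction σ with
  | nil => rfl
  | cons i σ ih =>
    rw [List.cons_append, word_cons, word_cons, ih]
    rfl

lemma copy_append (σ τ : List (Fin N.n)) :
    N.copy (σ ++ τ) = N.word σ '' N.copy τ := by
  rw [copy, copy, word_append, image_comp]

lemma copy_compact (σ : List (Fin N.n)) : IsCompact (N.copy σ) :=
  N.Fcpt.image (N.word σ).continuous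

lemma exists_copy_mem (m : ℕ) (x : Euc d) (hx : x ∈ N.F) :
    ∃ σ, σ.length = m ∧ x ∈ N.copy σ := by
  induction m generalizing x with
  | zero => exact ⟨[], rfl, by rwa [copy_nil]⟩
  | succ m ih =>
    have hx' : x ∈ ⋃ k, N.f k '' N.F := by rwa [← N.Fattr]
    obtain ⟨k, hk⟩ := mem_iUnion.mp hx'
    obtain ⟨x', hx2, rfl⟩ := hk
    obtain ⟨σ, hlen, hmem⟩ := ih x' hx2
    exact ⟨k :: σ, by simp [hlen], by rw [copy_cons]; exact mem_image_of_mem _ hmem⟩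

/-- The set of `m`-level copies. -/
def copies (m : ℕ) : Set (Set (Euc d)) := {C | ∃ σ, σ.length = m ∧ C = N.copy σ}

lemma F_mem_copies : N.F ∈ N.copies 0 := ⟨[], rfl, (N.copy_nil).symm⟩

lemma image_mem_copies_one (k : Fin N.n) : N.f k '' N.F ∈ N.copies 1 :=
  ⟨[k], rfl, by rw [copy_cons, copy_nil]⟩

/-- The common contraction ratio. -/
noncomputable def ratio : NNReal := Finset.univ.sup fun k => (N.contr k).choose

lemma ratio_lt_one : N.ratio < 1 := by
  refine (Finset.sup_lt_iff (by norm_num)).mpr fun k _ => (N.contr k).choose_spec.1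

lemma lipschitz_f (k : Fin N.n) : LipschitzWith N.ratio (N.f k) :=
  ((N.contr k).choose_spec.2).weaken
    (Finset.le_sup (f := fun k => (N.contr k).choose) (Finset.mem_univ k))

lemma lipschitz_word (σ : List (Fin N.n)) :
    LipschitzWith (N.ratio ^ σ.length) (N.word σ) := by
  induction σ with
  | nil => simpa [word] using LipschitzWith.id
  | cons i σ ih =>
    rw [word_cons, List.length_cons, pow_succ']
    exact (N.lipschitz_f i).comp ih

/-- Diameter bound for `m`-level copies. -/
noncomputable def eps (m : ℕ) : ℝ := (N.ratio : ℝ) ^ m * Metric.diam N.F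

lemma eps_nonneg (m : ℕ) : 0 ≤ N.eps m :=
  mul_nonneg (pow_nonneg N.ratio.2 m) Metric.diam_nonneg

lemma eps_antitone : Antitone N.eps := fun m m' h =>
  mul_le_mul_of_nonneg_right
    (pow_le_pow_of_le_one N.ratio.2 (le_of_lt (by exact_mod_cast N.ratio_lt_one)) h)
    Metric.diam_nonneg

lemma eps_tendsto : Tendsto N.eps atTop (𝓝 0) := by
  have h := (tendsto_pow_atTop_nhds_zero_of_lt_one N.ratio.2
    (by exact_mod_cast N.ratio_lt_one)).mul_const (Metric.diam N.F)
  show Tendsto (fun m => (N.ratio : ℝ) ^ m * Metric.diam N.F) atTop (𝓝 0)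
  simpa using h

lemma dist_le_eps {m : ℕ} {C : Set (Euc d)} (hC : C ∈ N.copies m) {x y : Euc d}
    (hx : x ∈ C) (hy : y ∈ C) : dist x y ≤ N.eps m := by
  obtain ⟨σ, hlen, rfl⟩ := hC
  obtain ⟨u, hu, rfl⟩ := hx
  obtain ⟨v, hv, rfl⟩ := hy
  calc dist (N.word σ u) (N.word σ v) ≤ (N.ratio ^ σ.length : NNReal) * dist u v :=
        (N.lipschitz_word σ).dist_le_mul u v
    _ ≤ (N.ratio : ℝ) ^ m * Metric.diam N.F := by
        rw [hlen]
        push_cast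
        exact mul_le_mul_of_nonneg_left
          (Metric.dist_le_diam_of_mem N.Fcpt.isBounded hu hv) (pow_nonneg N.ratio.2 m)

instance instNeZeroN : NeZero N.n := ⟨by have := N.hn; omega⟩

lemma mk_one_eq : (⟨1, by have := N.hn; omega⟩ : Fin N.n) = 1 := by
  ext
  rw [Fin.val_one']
  exact (Nat.mod_eq_of_lt (by have := N.hn; omega)).symm

lemma z_mem_left (k : Fin N.n) : N.z k ∈ N.f k '' N.F := by
  have h : N.z k ∈ ({N.z k} : Set (Euc d)) := rfl
  rw [← N.hz k] at h
  exact h.1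

lemma z_mem_right (k : Fin N.n) : N.z k ∈ N.f (k + 1) '' N.F := by
  have h : N.z k ∈ ({N.z k} : Set (Euc d)) := rfl
  rw [← N.hz k] at h
  rw [← N.mk_one_eq]
  exact h.2

open Fin.NatCast in
lemma chain_aux (r : ℕ) : ∀ (i : Fin N.n) (a b : Euc d), a ∈ N.f i '' N.F →
    b ∈ N.f (i + (r : Fin N.n)) '' N.F → Nonempty (CData (N.copies 1) N.F a b) := by
  haveI : NeZero N.n := ⟨by have := N.hn; omega⟩
  induction r with
  | zero =>
    intro i a b ha hb
    rw [Nat.cast_zero, add_zero] at hb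
    exact ⟨.single a b (N.f i '' N.F) (N.image_mem_copies_one i) (N.image_F_subset i) ha hb⟩
  | succ r ih =>
    intro i a b ha hb
    have hb' : b ∈ N.f ((i + 1) + (r : Fin N.n)) '' N.F := by
      rwa [show (i + 1) + (r : Fin N.n) = i + ((r + 1 : ℕ) : Fin N.n) by push_cast; abel]
    obtain ⟨rest⟩ := ih (i + 1) (N.z i) b (N.z_mem_right i) hb'
    exact ⟨.cons a (N.z i) b (N.f i '' N.F) (N.image_mem_copies_one i) (N.image_F_subset i)
      ha (N.z_mem_left i) rest⟩

lemma chain_F (a b : Euc d) (ha : a ∈ N.F) (hb : b ∈ N.F) :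
    Nonempty (CData (N.copies 1) N.F a b) := by
  haveI : NeZero N.n := ⟨by have := N.hn; omega⟩
  have ha' : a ∈ ⋃ k, N.f k '' N.F := by rwa [← N.Fattr]
  have hb' : b ∈ ⋃ k, N.f k '' N.F := by rwa [← N.Fattr]
  obtain ⟨i, hai⟩ := mem_iUnion.mp ha'
  obtain ⟨j, hbj⟩ := mem_iUnion.mp hb'
  refine N.chain_aux ((j - i).val) i a b hai ?_
  rwa [Fin.cast_val_eq_self, add_comm, sub_add_cancel]

lemma subdiv (m : ℕ) (C : Set (Euc d)) (hC : C ∈ N.copies m) (a b : Euc d)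
    (ha : a ∈ C) (hb : b ∈ C) : Nonempty (CData (N.copies (m + 1)) C a b) := by
  obtain ⟨σ, hlen, rfl⟩ := hC
  obtain ⟨u, hu, rfl⟩ := ha
  obtain ⟨v, hv, rfl⟩ := hb
  obtain ⟨c⟩ := N.chain_F u v hu hv
  refine ⟨c.map (N.word σ) fun D hD => ?_⟩
  obtain ⟨τ, hτ, rfl⟩ := hD
  exact ⟨σ ++ τ, by simp [hτ, hlen], (N.copy_append σ τ).symm⟩

/-! ### The path approximations and their limit -/

/-- Successive path approximations between two points of an `m`-level copy. -/
noncomputable def approx : ℕ → ∀ (m : ℕ) (C : Set (Euc d)), C ∈ N.copies m →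
    ∀ a b : Euc d, a ∈ C → b ∈ C → Path a b
  | 0, _, _, _, a, b, _, _ => seg a b
  | (j + 1), m, C, hC, a, b, ha, hb =>
      (Classical.choice (N.subdiv m C hC a b ha hb)).path
        (fun D p q hT hp hq => approx j (m + 1) D hT p q hp hq)

lemma approx_near (j : ℕ) : ∀ (m : ℕ) (C : Set (Euc d)) (hC : C ∈ N.copies m)
    (a b : Euc d) (ha : a ∈ C) (hb : b ∈ C) (t : unitInterval),
    ∃ y ∈ C, dist (N.approx j m C hC a b ha hb t) y ≤ N.eps (m + j) := by
  induction j with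
  | zero =>
    intro m C hC a b ha hb t
    exact ⟨a, ha, (seg_dist a b t).trans (by simpa using N.dist_le_eps hC ha hb)⟩
  | succ j ih =>
    intro m C hC a b ha hb t
    rw [approx]
    refine CData.path_prop _ _ (fun x => ∃ y ∈ C, dist x y ≤ N.eps (m + (j + 1))) ?_ t
    intro D p q hT hs hp hq t
    obtain ⟨y, hy, hd⟩ := ih (m + 1) D hT p q hp hq t
    exact ⟨y, hs hy, by rwa [show m + 1 + j = m + (j + 1) by omega] at hd⟩

lemma approx_close (J : ℕ) : ∀ (j₁ j₂ : ℕ), J ≤ j₁ → J ≤ j₂ →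
    ∀ (m : ℕ) (C : Set (Euc d)) (hC : C ∈ N.copies m) (a b : Euc d)
      (ha : a ∈ C) (hb : b ∈ C) (t : unitInterval),
    dist (N.approx j₁ m C hC a b ha hb t) (N.approx j₂ m C hC a b ha hb t)
      ≤ 3 * N.eps (m + J) := by
  induction J with
  | zero =>
    intro j₁ j₂ _ _ m C hC a b ha hb t
    obtain ⟨y₁, hy₁, hd₁⟩ := N.approx_near j₁ m C hC a b ha hb t
    obtain ⟨y₂, hy₂, hd₂⟩ := N.approx_near j₂ m C hC a b ha hb t
    have h12 : dist y₁ y₂ ≤ N.eps m := N.dist_le_eps hC hy₁ hy₂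
    have e₁ : N.eps (m + j₁) ≤ N.eps m := N.eps_antitone (by omega)
    have e₂ : N.eps (m + j₂) ≤ N.eps m := N.eps_antitone (by omega)
    calc dist (N.approx j₁ m C hC a b ha hb t) (N.approx j₂ m C hC a b ha hb t)
        ≤ dist (N.approx j₁ m C hC a b ha hb t) y₁ + dist y₁ y₂
            + dist y₂ (N.approx j₂ m C hC a b ha hb t) := dist_triangle4 _ _ _ _
      _ ≤ 3 * N.eps (m + 0) := by rw [dist_comm y₂]; simpa using by linarith
  | succ J ih =>
    intro j₁ j₂ h₁ h₂ m C hC a b ha hb t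
    obtain ⟨k₁, rfl⟩ : ∃ k, j₁ = k + 1 := ⟨j₁ - 1, by omega⟩
    obtain ⟨k₂, rfl⟩ : ∃ k, j₂ = k + 1 := ⟨j₂ - 1, by omega⟩
    rw [approx, approx, show m + (J + 1) = (m + 1) + J by omega]
    exact CData.path_close _ _ _ _
      (fun D p q hT hp hq t => ih k₁ k₂ (by omega) (by omega) (m + 1) D hT p q hp hq t) t

/-- Any two points of a necklace are joined by a path in it. -/
lemma joinedIn_F (a b : Euc d) (ha : a ∈ N.F) (hb : b ∈ N.F) : JoinedIn N.F a b := by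
  set γ : ℕ → unitInterval → Euc d := fun j t => N.approx j 0 N.F N.F_mem_copies a b ha hb t with hγ
  have hclose : ∀ (J j₁ j₂ : ℕ), J ≤ j₁ → J ≤ j₂ → ∀ t : unitInterval,
      dist (γ j₁ t) (γ j₂ t) ≤ 3 * N.eps J := by
    intro J j₁ j₂ h₁ h₂ t
    simpa using N.approx_close J j₁ j₂ h₁ h₂ 0 N.F N.F_mem_copies a b ha hb t
  have heps3 : Tendsto (fun J => 3 * N.eps J) atTop (𝓝 0) := by
    simpa using N.eps_tendsto.const_mul 3
  have hcauchy : ∀ t : unitInterval, ∃ l, Tendsto (fun j => γ j t) atTop (𝓝 l) := fun t =>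
    cauchySeq_tendsto_of_complete (cauchySeq_of_le_tendsto_0 (fun J => 3 * N.eps J)
      (fun p q J hp hq => hclose J p q hp hq t) heps3)
  choose g hg using hcauchy
  have hdistg : ∀ (j : ℕ) (t : unitInterval), dist (g t) (γ j t) ≤ 3 * N.eps j := by
    intro j t
    have hlim : Tendsto (fun k => dist (γ k t) (γ j t)) atTop (𝓝 (dist (g t) (γ j t))) :=
      (hg t).dist tendsto_const_nhds
    exact le_of_tendsto hlim (eventually_atTop.mpr
      ⟨j, fun k hk => hclose j k j hk le_rfl t⟩)
  have huniform : TendstoUniformly γ g atTop := by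
    rw [Metric.tendstoUniformly_iff]
    intro ε hε
    filter_upwards [heps3.eventually (gt_mem_nhds hε)] with j hj t
    exact lt_of_le_of_lt (hdistg j t) hj
  have hcont : Continuous g :=
    huniform.continuous (Eventually.of_forall fun j =>
      (N.approx j 0 N.F N.F_mem_copies a b ha hb).continuous).frequently
  have hg0 : g 0 = a := by
    refine tendsto_nhds_unique (hg 0) ?_
    have : (fun j => γ j 0) = fun _ => a := funext fun j => Path.source _
    rw [this]; exact tendsto_const_nhds
  have hg1 : g 1 = b := by
    refine tendsto_nhds_unique (hg 1) ?_
    have : (fun j => γ j 1) = fun _ => b := funext fun j => Path.target _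
    rw [this]; exact tendsto_const_nhds
  have hmem : ∀ t, g t ∈ N.F := by
    intro t
    have hy : ∀ j, ∃ y ∈ N.F, dist (γ j t) y ≤ N.eps j := fun j => by
      simpa using N.approx_near j 0 N.F N.F_mem_copies a b ha hb t
    choose y hyF hyd using hy
    have hylim : Tendsto y atTop (𝓝 (g t)) := by
      rw [tendsto_iff_dist_tendsto_zero]
      refine squeeze_zero (g := fun j => 4 * N.eps j) (fun j => dist_nonneg) (fun j => ?_) ?_
      · calc dist (y j) (g t) ≤ dist (y j) (γ j t) + dist (γ j t) (g t) := dist_triangle _ _ _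
          _ ≤ N.eps j + 3 * N.eps j := by
              rw [dist_comm (y j) (γ j t), dist_comm (γ j t) (g t)]
              exact add_le_add (hyd j) (hdistg j t)
          _ = 4 * N.eps j := by ring
      · simpa using N.eps_tendsto.const_mul 4
    exact N.Fcpt.isClosed.mem_of_tendsto hylim (Eventually.of_forall hyF)
  exact ⟨⟨⟨g, hcont⟩, hg0, hg1⟩, hmem⟩

lemma pathConnected_F : IsPathConnected N.F := by
  obtain ⟨x, hx⟩ := N.Fne
  exact ⟨x, hx, fun _ hy => N.joinedIn_F x _ hx hy⟩

lemma copy_pathConnected (σ : List (Fin N.n)) : IsPathConnected (N.copy σ) :=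
  N.pathConnected_F.image (N.word σ).continuous

end Necklace


namespace Necklace

open NecklaceAux Filter

variable {d : ℕ} (N : Necklace d)

lemma copiesNbhd_subset (x : Euc d) (m : ℕ) : N.copiesNbhd x m ⊆ N.F :=
  iUnion₂_subset fun σ _ => N.copy_subset σ

lemma mem_copiesNbhd {x : Euc d} (hx : x ∈ N.F) (m : ℕ) : x ∈ N.copiesNbhd x m := by
  obtain ⟨σ, hlen, hmem⟩ := N.exists_copy_mem m x hx
  exact mem_biUnion ⟨hlen, hmem⟩ hmem

lemma copiesNbhd_pathConnected {x : Euc d} (hx : x ∈ N.F) (m : ℕ) :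
    IsPathConnected (N.copiesNbhd x m) := by
  refine ⟨x, N.mem_copiesNbhd hx m, ?_⟩
  intro y hy
  rw [copiesNbhd, mem_iUnion₂] at hy
  obtain ⟨σ, ⟨hlen, hxσ⟩, hyσ⟩ := hy
  exact ((N.copy_pathConnected σ).joinedIn x hxσ y hyσ).mono
    (subset_biUnion_of_mem (u := fun σ => N.copy σ) ⟨hlen, hxσ⟩)

lemma copiesNbhd_small {x : Euc d} (m : ℕ) {y : Euc d} (hy : y ∈ N.copiesNbhd x m) :
    dist y x ≤ N.eps m := by
  rw [copiesNbhd, mem_iUnion₂] at hy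
  obtain ⟨σ, ⟨hlen, hxσ⟩, hyσ⟩ := hy
  exact N.dist_le_eps ⟨σ, hlen, rfl⟩ hyσ hxσ

lemma copiesNbhd_mem_nhdsWithin {x : Euc d} (_hx : x ∈ N.F) (m : ℕ) :
    N.copiesNbhd x m ∈ 𝓝[N.F] x := by
  classical
  set Bad : Set (Euc d) :=
    ⋃ σ ∈ {σ : List (Fin N.n) | σ.length = m ∧ x ∉ N.copy σ}, N.copy σ with hBad
  have hclosed : IsClosed Bad := Set.Finite.isClosed_biUnion
    ((List.finite_length_eq (Fin N.n) m).subset fun σ hσ => hσ.1)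
    (fun σ _ => (N.copy_compact σ).isClosed)
  have hxBad : x ∉ Bad := by
    rw [hBad, mem_iUnion₂]
    rintro ⟨σ, ⟨_, hnot⟩, hmem⟩
    exact hnot hmem
  refine mem_nhdsWithin.mpr ⟨Badᶜ, hclosed.isOpen_compl, hxBad, ?_⟩
  rintro y ⟨hyBad, hyF⟩
  obtain ⟨σ, hlen, hyσ⟩ := N.exists_copy_mem m y hyF
  by_cases h : x ∈ N.copy σ
  · exact mem_biUnion ⟨hlen, h⟩ hyσ
  · exact absurd (mem_biUnion
      (show σ ∈ {σ : List (Fin N.n) | σ.length = m ∧ x ∉ N.copy σ} from ⟨hlen, h⟩) hyσ) hyBad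

lemma copiesNbhd_basis {x : Euc d} (hx : x ∈ N.F) :
    (𝓝[N.F] x).HasBasis (fun m : ℕ => 1 ≤ m) (N.copiesNbhd x) := by
  refine ⟨fun t => ⟨fun ht => ?_,
    fun ⟨m, _, hsub⟩ => mem_of_superset (N.copiesNbhd_mem_nhdsWithin hx m) hsub⟩⟩
  obtain ⟨ε, hε, hball⟩ := Metric.mem_nhdsWithin_iff.mp ht
  obtain ⟨m, hmε, hm1⟩ :=
    ((N.eps_tendsto.eventually (gt_mem_nhds hε)).and (eventually_ge_atTop 1)).exists
  refine ⟨m, hm1, fun y hy => hball ⟨?_, N.copiesNbhd_subset x m hy⟩⟩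
  exact Metric.mem_ball.mpr (lt_of_le_of_lt (N.copiesNbhd_small m hy) hmε)

lemma preimage_val_pathConnected {U : Set (Euc d)} (hUF : U ⊆ N.F)
    (hU : IsPathConnected U) : IsPathConnected (Subtype.val ⁻¹' U : Set N.F) := by
  obtain ⟨x, hxU, hjoin⟩ := hU
  refine ⟨⟨x, hUF hxU⟩, hxU, ?_⟩
  rintro ⟨y, hyF⟩ hyU
  obtain ⟨γ, hγ⟩ := hjoin hyU
  exact ⟨⟨⟨fun t => ⟨γ t, hUF (hγ t)⟩, (γ.continuous).subtype_mk _⟩,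
    Subtype.ext γ.source, Subtype.ext γ.target⟩, fun t => hγ t⟩

lemma subtype_basis (x : N.F) :
    (𝓝 x).HasBasis (fun m : ℕ => 1 ≤ m)
      (fun m => (Subtype.val ⁻¹' N.copiesNbhd ↑x m : Set N.F)) := by
  rw [nhds_subtype_eq_comap_nhdsWithin]
  exact (N.copiesNbhd_basis x.2).comap _

lemma locPathConnectedSpace_F : LocPathConnectedSpace N.F :=
  LocPathConnectedSpace.of_bases (fun x => N.subtype_basis x)
    (fun x m _ => N.preimage_val_pathConnected (N.copiesNbhd_subset _ _)
      (N.copiesNbhd_pathConnected x.2 m))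

end Necklace


/-- Every fractal necklace `F` in `ℝ^d` is locally path-connected: for each `z ∈ F` and
each `m ≥ 1`, the union of all `m`-level copies of `F` containing `z` is a
path-connected neighborhood of `z` in `F`, and these sets form a neighborhood basis of
`z` in `F`. -/
theorem Necklace.locPathConnected {d : ℕ} (N : Necklace d) :
    LocPathConnectedSpace N.F ∧
    ∀ z ∈ N.F,
      (∀ m : ℕ, 1 ≤ m →
        IsPathConnected (N.copiesNbhd z m) ∧ N.copiesNbhd z m ∈ 𝓝[N.F] z) ∧
      (𝓝[N.F] z).HasBasis (fun m : ℕ => 1 ≤ m) (N.copiesNbhd z) := by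
  exact ⟨N.locPathConnectedSpace_F, fun z hz =>
    ⟨fun m _ => ⟨N.copiesNbhd_pathConnected hz m, N.copiesNbhd_mem_nhdsWithin hz m⟩,
      N.copiesNbhd_basis hz⟩⟩
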